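/- arXiv:1405.4435 — 8 statements merged into one kernel-verified Lean document; each statement's English description precedes it below -/
import Mathlib

section
/- For fixed γ > 0 and y > 0, the function F_y(x) = exp(γ·arctan(x/(y − γx)))·sqrt(y² + 2γyx + (1+γ²)x²) − exp(−γ·arctan(x/(y + γx)))·sqrt(y² − 2γyx + (1+γ²)x²) is strictly increasing on the interval (0, y/γ), satisfies F_y(0) = 0, and hence F_y(x) > 0 for all 0 < x < y/γ. -/
open Real
set_option maxHeartbeats 1600000

private lemma aux_deriv (γ y : ℝ) (hγ : 0 < γ) (hy : 0 < y) (x : ℝ) (hx0 : 0 ≤ x)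
    (hx1 : γ * x < y) :
    HasDerivAt (fun x : ℝ =>
      Real.exp (γ * Real.arctan (x / (y - γ * x))) *
        Real.sqrt (y ^ 2 + 2 * γ * y * x + (1 + γ ^ 2) * x ^ 2) -
      Real.exp (-(γ * Real.arctan (x / (y + γ * x)))) *
        Real.sqrt (y ^ 2 - 2 * γ * y * x + (1 + γ ^ 2) * x ^ 2))
      (Real.exp (γ * Real.arctan (x / (y - γ * x))) *
        (γ * y * Real.sqrt (y ^ 2 + 2 * γ * y * x + (1 + γ ^ 2) * x ^ 2) /
            (y ^ 2 - 2 * γ * y * x + (1 + γ ^ 2) * x ^ 2) +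
          (γ * y + (1 + γ ^ 2) * x) / Real.sqrt (y ^ 2 + 2 * γ * y * x + (1 + γ ^ 2) * x ^ 2)) -
       Real.exp (-(γ * Real.arctan (x / (y + γ * x)))) *
        (-(γ * y * Real.sqrt (y ^ 2 - 2 * γ * y * x + (1 + γ ^ 2) * x ^ 2) /
            (y ^ 2 + 2 * γ * y * x + (1 + γ ^ 2) * x ^ 2)) +
          ((1 + γ ^ 2) * x - γ * y) / Real.sqrt (y ^ 2 - 2 * γ * y * x + (1 + γ ^ 2) * x ^ 2))) x := by
  have hm : 0 < y - γ * x := by linarith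
  have hp : 0 < y + γ * x := by nlinarith
  have hP : 0 < y ^ 2 + 2 * γ * y * x + (1 + γ ^ 2) * x ^ 2 := by nlinarith [sq_nonneg x]
  have hQ : 0 < y ^ 2 - 2 * γ * y * x + (1 + γ ^ 2) * x ^ 2 := by
    nlinarith [sq_nonneg x, mul_pos hm hm]
  have hsP : 0 < Real.sqrt (y ^ 2 + 2 * γ * y * x + (1 + γ ^ 2) * x ^ 2) := Real.sqrt_pos.mpr hP
  have hsQ : 0 < Real.sqrt (y ^ 2 - 2 * γ * y * x + (1 + γ ^ 2) * x ^ 2) := Real.sqrt_pos.mpr hQ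
  -- derivative of x / (y - γ x)
  have h1 : HasDerivAt (fun x : ℝ => x / (y - γ * x)) (y / (y - γ * x) ^ 2) x := by
    have := (hasDerivAt_id x).div ((hasDerivAt_const x y).sub ((hasDerivAt_id x).const_mul γ))
      hm.ne'
    refine this.congr_deriv ?_
    show (1 * (y - γ * x) - x * (0 - γ * 1)) / (y - γ * x) ^ 2 = y / (y - γ * x) ^ 2
    field_simp
    ring
  have h1' : HasDerivAt (fun x : ℝ => x / (y + γ * x)) (y / (y + γ * x) ^ 2) x := by
    have := (hasDerivAt_id x).div ((hasDerivAt_const x y).add ((hasDerivAt_id x).const_mul γ))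
      hp.ne'
    refine this.congr_deriv ?_
    show (1 * (y + γ * x) - x * (0 + γ * 1)) / (y + γ * x) ^ 2 = y / (y + γ * x) ^ 2
    field_simp
    ring
  -- derivative of arctan parts
  have h2 : HasDerivAt (fun x : ℝ => Real.arctan (x / (y - γ * x)))
      (y / (y ^ 2 - 2 * γ * y * x + (1 + γ ^ 2) * x ^ 2)) x := by
    have := (Real.hasDerivAt_arctan (x / (y - γ * x))).comp x h1
    refine this.congr_deriv ?_
    symm
    rw [div_pow]
    rw [div_eq_iff hQ.ne']
    have h0 : (1 : ℝ) + x ^ 2 / (y - γ * x) ^ 2 = (y ^ 2 - 2 * γ * y * x + (1 + γ ^ 2) * x ^ 2) / (y - γ * x) ^ 2 := by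
      rw [eq_div_iff (pow_pos hm 2).ne', add_mul, div_mul_cancel₀ _ (pow_pos hm 2).ne']
      ring
    rw [h0]
    have hQ2 : y * (y - 2 * γ * x) + x ^ 2 * (1 + γ ^ 2) ≠ 0 := by
      rw [show y * (y - 2 * γ * x) + x ^ 2 * (1 + γ ^ 2) = y ^ 2 - 2 * γ * y * x + (1 + γ ^ 2) * x ^ 2 by ring]
      exact hQ.ne'
    field_simp
  have h2' : HasDerivAt (fun x : ℝ => Real.arctan (x / (y + γ * x)))
      (y / (y ^ 2 + 2 * γ * y * x + (1 + γ ^ 2) * x ^ 2)) x := by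
    have := (Real.hasDerivAt_arctan (x / (y + γ * x))).comp x h1'
    refine this.congr_deriv ?_
    symm
    rw [div_pow]
    rw [div_eq_iff hP.ne']
    have h0 : (1 : ℝ) + x ^ 2 / (y + γ * x) ^ 2 = (y ^ 2 + 2 * γ * y * x + (1 + γ ^ 2) * x ^ 2) / (y + γ * x) ^ 2 := by
      field_simp
      ring
    rw [h0]
    field_simp
  -- exp parts
  have h3 : HasDerivAt (fun x : ℝ => Real.exp (γ * Real.arctan (x / (y - γ * x))))
      (Real.exp (γ * Real.arctan (x / (y - γ * x))) *
        (γ * (y / (y ^ 2 - 2 * γ * y * x + (1 + γ ^ 2) * x ^ 2)))) x :=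
    (h2.const_mul γ).exp
  have h3' : HasDerivAt (fun x : ℝ => Real.exp (-(γ * Real.arctan (x / (y + γ * x)))))
      (Real.exp (-(γ * Real.arctan (x / (y + γ * x)))) *
        (-(γ * (y / (y ^ 2 + 2 * γ * y * x + (1 + γ ^ 2) * x ^ 2))))) x :=
    ((h2'.const_mul γ).neg).exp
  -- sqrt parts
  have h4 : HasDerivAt (fun x : ℝ => y ^ 2 + 2 * γ * y * x + (1 + γ ^ 2) * x ^ 2)
      (2 * γ * y + (1 + γ ^ 2) * (2 * x)) x := by
    have ha : HasDerivAt (fun x : ℝ => 2 * γ * y * x) (2 * γ * y) x := by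
      simpa using (hasDerivAt_id x).const_mul (2 * γ * y)
    have hb : HasDerivAt (fun x : ℝ => (1 + γ ^ 2) * x ^ 2) ((1 + γ ^ 2) * (2 * x)) x := by
      have := (hasDerivAt_pow 2 x).const_mul (1 + γ ^ 2)
      simpa using this
    exact ((ha.const_add (y ^ 2)).add hb)
  have h4' : HasDerivAt (fun x : ℝ => y ^ 2 - 2 * γ * y * x + (1 + γ ^ 2) * x ^ 2)
      (-(2 * γ * y) + (1 + γ ^ 2) * (2 * x)) x := by
    have ha : HasDerivAt (fun x : ℝ => y ^ 2 - 2 * γ * y * x) (-(2 * γ * y)) x := by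
      have := ((hasDerivAt_id x).const_mul (2 * γ * y)).const_sub (y ^ 2)
      simpa using this
    have hb : HasDerivAt (fun x : ℝ => (1 + γ ^ 2) * x ^ 2) ((1 + γ ^ 2) * (2 * x)) x := by
      have := (hasDerivAt_pow 2 x).const_mul (1 + γ ^ 2)
      simpa using this
    exact (ha.add hb)
  have h5 : HasDerivAt (fun x : ℝ => Real.sqrt (y ^ 2 + 2 * γ * y * x + (1 + γ ^ 2) * x ^ 2))
      ((2 * γ * y + (1 + γ ^ 2) * (2 * x)) /
        (2 * Real.sqrt (y ^ 2 + 2 * γ * y * x + (1 + γ ^ 2) * x ^ 2))) x :=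
    h4.sqrt hP.ne'
  have h5' : HasDerivAt (fun x : ℝ => Real.sqrt (y ^ 2 - 2 * γ * y * x + (1 + γ ^ 2) * x ^ 2))
      ((-(2 * γ * y) + (1 + γ ^ 2) * (2 * x)) /
        (2 * Real.sqrt (y ^ 2 - 2 * γ * y * x + (1 + γ ^ 2) * x ^ 2))) x :=
    h4'.sqrt hQ.ne'
  have H := (h3.mul h5).sub (h3'.mul h5')
  refine H.congr_deriv ?_
  field_simp
  ring

private lemma aux_pos (γ y : ℝ) (hγ : 0 < γ) (hy : 0 < y) (x : ℝ) (hx0 : 0 < x)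
    (hx1 : γ * x < y) :
    0 < Real.exp (γ * Real.arctan (x / (y - γ * x))) *
        (γ * y * Real.sqrt (y ^ 2 + 2 * γ * y * x + (1 + γ ^ 2) * x ^ 2) /
            (y ^ 2 - 2 * γ * y * x + (1 + γ ^ 2) * x ^ 2) +
          (γ * y + (1 + γ ^ 2) * x) / Real.sqrt (y ^ 2 + 2 * γ * y * x + (1 + γ ^ 2) * x ^ 2)) -
       Real.exp (-(γ * Real.arctan (x / (y + γ * x)))) *
        (-(γ * y * Real.sqrt (y ^ 2 - 2 * γ * y * x + (1 + γ ^ 2) * x ^ 2) /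
            (y ^ 2 + 2 * γ * y * x + (1 + γ ^ 2) * x ^ 2)) +
          ((1 + γ ^ 2) * x - γ * y) / Real.sqrt (y ^ 2 - 2 * γ * y * x + (1 + γ ^ 2) * x ^ 2)) := by
  have hm : 0 < y - γ * x := by linarith
  have hp : 0 < y + γ * x := by positivity
  set P := y ^ 2 + 2 * γ * y * x + (1 + γ ^ 2) * x ^ 2 with hPdef
  set Q := y ^ 2 - 2 * γ * y * x + (1 + γ ^ 2) * x ^ 2 with hQdef
  have hP : 0 < P := by nlinarith [sq_nonneg x]
  have hQ : 0 < Q := by nlinarith [sq_nonneg x, mul_pos hm hm]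
  set sP := Real.sqrt P with hsPdef
  set sQ := Real.sqrt Q with hsQdef
  have hsP : 0 < sP := Real.sqrt_pos.mpr hP
  have hsQ : 0 < sQ := Real.sqrt_pos.mpr hQ
  have hsP2 : sP ^ 2 = P := Real.sq_sqrt hP.le
  have hsQ2 : sQ ^ 2 = Q := Real.sq_sqrt hQ.le
  have hQP : Q ≤ P := by nlinarith [mul_pos (mul_pos hγ hy) hx0]
  have hsQP : sQ ≤ sP := Real.sqrt_le_sqrt hQP
  set eA := Real.exp (γ * Real.arctan (x / (y - γ * x))) with heAdef
  set eB := Real.exp (-(γ * Real.arctan (x / (y + γ * x)))) with heBdef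
  have heA : 1 < eA := by
    rw [heAdef, Real.one_lt_exp_iff]
    have : (0:ℝ) < Real.arctan (x / (y - γ * x)) := by
      rw [← Real.arctan_zero]
      exact Real.arctan_strictMono (div_pos hx0 hm)
    positivity
  have heB : eB < 1 := by
    rw [heBdef, Real.exp_lt_one_iff]
    have : (0:ℝ) < Real.arctan (x / (y + γ * x)) := by
      rw [← Real.arctan_zero]
      exact Real.arctan_strictMono (div_pos hx0 hp)
    nlinarith
  have heBpos : 0 < eB := Real.exp_pos _
  set a := γ * y * sP / Q + (γ * y + (1 + γ ^ 2) * x) / sP with hadef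
  set b := -(γ * y * sQ / P) + ((1 + γ ^ 2) * x - γ * y) / sQ with hbdef
  have ha : 0 < a := by
    apply add_pos
    · exact div_pos (by positivity) hQ
    · exact div_pos (by positivity) hsP
  set Ng := γ * y * P + (γ * y + (1 + γ ^ 2) * x) * Q with hNgdef
  set Nh := ((1 + γ ^ 2) * x - γ * y) * P - γ * y * Q with hNhdef
  have hdiff : Ng - Nh = 4 * γ * y ^ 3 := by
    rw [hNgdef, hNhdef, hPdef, hQdef]; ring
  have hNg : 0 < Ng := by
    rw [hNgdef]
    have : 0 < γ * y * P := by positivity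
    have : 0 < (γ * y + (1 + γ ^ 2) * x) * Q := by positivity
    linarith
  have hPQ : Q * sP ≤ P * sQ := by nlinarith [mul_pos hsP hsQ]
  have hkey : Nh * (Q * sP) ≤ Ng * (P * sQ) := by
    rcases le_or_gt Nh 0 with h | h
    · have h1 : Nh * (Q * sP) ≤ 0 := mul_nonpos_of_nonpos_of_nonneg h (by positivity)
      have h2 : 0 ≤ Ng * (P * sQ) := by positivity
      linarith
    · have h4 : 0 < 4 * γ * y ^ 3 := by positivity
      exact mul_le_mul (by linarith) hPQ (by positivity) hNg.le
  have hmul : 0 < P * Q * sP * sQ := by positivity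
  have hexpand : (a - b) * (P * Q * sP * sQ) = Ng * (P * sQ) - Nh * (Q * sP) := by
    rw [hadef, hbdef, hNgdef, hNhdef, ← hsP2, ← hsQ2]
    field_simp
    ring
  have hab : b ≤ a := by
    have h0 : 0 * (P * Q * sP * sQ) ≤ (a - b) * (P * Q * sP * sQ) := by
      rw [hexpand]; simpa using sub_nonneg.mpr hkey
    have := le_of_mul_le_mul_right h0 hmul
    linarith
  rcases le_or_gt b 0 with hb | hb
  · have h1 : 0 < eA * a := mul_pos (by linarith) ha
    have h2 : eB * b ≤ 0 := mul_nonpos_of_nonneg_of_nonpos heBpos.le hb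
    linarith
  · have h1 : a ≤ eA * a := le_mul_of_one_le_left ha.le heA.le
    have h2 : eB * b < b := by
      have := mul_lt_mul_of_pos_right heB hb
      linarith [this]
    linarith

theorem stmt_1 (γ y : ℝ) (hγ : 0 < γ) (hy : 0 < y)
    (F : ℝ → ℝ)
    (hF : ∀ x : ℝ, F x =
      Real.exp (γ * Real.arctan (x / (y - γ * x))) *
        Real.sqrt (y ^ 2 + 2 * γ * y * x + (1 + γ ^ 2) * x ^ 2) -
      Real.exp (-(γ * Real.arctan (x / (y + γ * x)))) *
        Real.sqrt (y ^ 2 - 2 * γ * y * x + (1 + γ ^ 2) * x ^ 2)) :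
    StrictMonoOn F (Set.Ioo 0 (y / γ)) ∧ F 0 = 0 ∧
      ∀ x : ℝ, 0 < x → x < y / γ → 0 < F x := by
  have hFeq : F = fun x : ℝ =>
      Real.exp (γ * Real.arctan (x / (y - γ * x))) *
        Real.sqrt (y ^ 2 + 2 * γ * y * x + (1 + γ ^ 2) * x ^ 2) -
      Real.exp (-(γ * Real.arctan (x / (y + γ * x)))) *
        Real.sqrt (y ^ 2 - 2 * γ * y * x + (1 + γ ^ 2) * x ^ 2) := funext hF
  have hmem : ∀ x ∈ Set.Ico (0:ℝ) (y / γ), 0 ≤ x ∧ γ * x < y := by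
    intro x hx
    refine ⟨hx.1, ?_⟩
    have := hx.2
    rw [lt_div_iff₀ hγ] at this
    linarith [this]
  have hmono : StrictMonoOn F (Set.Ico 0 (y / γ)) := by
    apply strictMonoOn_of_deriv_pos (convex_Ico _ _)
    · intro x hx
      obtain ⟨h1, h2⟩ := hmem x hx
      rw [hFeq]
      exact (aux_deriv γ y hγ hy x h1 h2).continuousAt.continuousWithinAt
    · intro x hx
      rw [interior_Ico] at hx
      obtain ⟨h1, h2⟩ := hmem x ⟨hx.1.le, hx.2⟩
      rw [hFeq, (aux_deriv γ y hγ hy x h1 h2).deriv]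
      exact aux_pos γ y hγ hy x hx.1 h2
  have hF0 : F 0 = 0 := by
    rw [hF]
    norm_num
  refine ⟨hmono.mono Set.Ioo_subset_Ico_self, hF0, ?_⟩
  intro x hx1 hx2
  have h0mem : (0:ℝ) ∈ Set.Ico (0:ℝ) (y / γ) := ⟨le_refl _, div_pos hy hγ⟩
  have hxmem : x ∈ Set.Ico (0:ℝ) (y / γ) := ⟨hx1.le, hx2⟩
  have := hmono h0mem hxmem hx1
  rwa [hF0] at this
end

section
/- Let γ > 0 and let h : ℝ → ℝ be C¹ with |h(y)| < y/γ for y > 0. Define the displacement function f(y) = exp(−γπ + γ·arctan(h(y)/(y − γh(y))))·sqrt(y² − 2γy·h(y) + (1+γ²)h(y)²) − exp(−γπ − γ·arctan(h(y)/(y + γh(y))))·sqrt(y² + 2γy·h(y) + (1+γ²)h(y)²). Then for y > 0: if h(y) > 0 then f(y) > 0; if h(y) < 0 then f(y) < 0; and if h(y) = 0 then f(y) = 0. -/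
open Real

lemma aux_g {x : ℝ} (hx : 0 < x) (hx2 : x < π / 2) :
    Real.sin x < x ^ 2 * Real.sin x + x * Real.cos x := by
  set g : ℝ → ℝ := fun x => x ^ 2 * Real.sin x + x * Real.cos x - Real.sin x with hg
  have hder : ∀ t : ℝ, HasDerivAt g (t * Real.sin t + t ^ 2 * Real.cos t) t := by
    intro t
    have h1 := Real.hasDerivAt_sin t
    have h2 := Real.hasDerivAt_cos t
    have := (((hasDerivAt_pow 2 t).mul h1).add ((hasDerivAt_id t).mul h2)).sub h1
    refine this.congr_deriv ?_
    simp only [id]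
    push_cast
    ring
  have hmono : StrictMonoOn g (Set.Icc 0 (π / 2)) := by
    apply strictMonoOn_of_deriv_pos (convex_Icc _ _)
    · exact fun t _ => (hder t).continuousAt.continuousWithinAt
    · intro t ht
      rw [interior_Icc] at ht
      obtain ⟨ht1, ht2⟩ := ht
      rw [(hder t).deriv]
      have h1 : 0 < Real.sin t := Real.sin_pos_of_pos_of_lt_pi ht1 (by linarith [Real.pi_pos])
      have h2 : 0 < Real.cos t := Real.cos_pos_of_mem_Ioo ⟨by linarith [Real.pi_pos], ht2⟩
      positivity
  have := hmono (Set.left_mem_Icc.mpr (by linarith)) ⟨hx.le, hx2.le⟩ hx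
  simp only [hg] at this
  simp at this
  linarith

lemma aux_arctan {x : ℝ} (hx : 0 < x) : x / (1 + x ^ 2) < Real.arctan x := by
  have h1 : Real.sin (Real.arctan x) = x / Real.sqrt (1 + x ^ 2) := Real.sin_arctan x
  have h2 : Real.cos (Real.arctan x) = 1 / Real.sqrt (1 + x ^ 2) := Real.cos_arctan x
  have hs : 0 < Real.sqrt (1 + x ^ 2) := by positivity
  have hθ : 0 < Real.arctan x := by simpa using Real.arctan_strictMono hx
  have hsin : Real.sin (Real.arctan x) < Real.arctan x := Real.sin_lt hθ
  have hcos : Real.cos (Real.arctan x) ≤ 1 := Real.cos_le_one _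
  have hsinpos : 0 < Real.sin (Real.arctan x) := by rw [h1]; positivity
  have key : x / (1 + x ^ 2) = Real.sin (Real.arctan x) * Real.cos (Real.arctan x) := by
    rw [h1, h2]
    rw [div_mul_div_comm, mul_one, ← Real.sqrt_mul (by positivity), Real.sqrt_mul_self (by positivity)]
  rw [key]
  nlinarith

lemma aux_quad {u H : ℝ} (hu : 0 < u) (hH : 0 < H) :
    H < (Real.arctan (H / u)) ^ 2 * H + Real.arctan (H / u) * u := by
  set α := Real.arctan (H / u) with hα
  have hα0 : 0 < α := by simpa [hα] using Real.arctan_strictMono (show (0:ℝ) < H / u by positivity)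
  have hα2 : α < π / 2 := Real.arctan_lt_pi_div_two _
  have hg := aux_g hα0 hα2
  have hr : 0 < Real.sqrt (1 + (H / u) ^ 2) := by positivity
  have hs_eq : Real.sqrt (u ^ 2 + H ^ 2) = u * Real.sqrt (1 + (H / u) ^ 2) := by
    rw [show u ^ 2 + H ^ 2 = u ^ 2 * (1 + (H / u) ^ 2) by field_simp,
      Real.sqrt_mul (sq_nonneg u), Real.sqrt_sq hu.le]
  have hs : 0 < Real.sqrt (u ^ 2 + H ^ 2) := by positivity
  have hsin : Real.sin α * Real.sqrt (u ^ 2 + H ^ 2) = H := by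
    rw [hα, Real.sin_arctan, hs_eq]
    field_simp
  have hcos : Real.cos α * Real.sqrt (u ^ 2 + H ^ 2) = u := by
    rw [hα, Real.cos_arctan, hs_eq]
    field_simp
  have h2 := mul_lt_mul_of_pos_right hg hs
  nlinarith [h2, hsin, hcos]

lemma key {u v H : ℝ} (hu : 0 < u) (hH : 0 < H) (huv : u < v) :
    Real.log (v ^ 2 + H ^ 2) - Real.log (u ^ 2 + H ^ 2) <
      (v - u) / H * (Real.arctan (H / u) + Real.arctan (H / v)) := by
  set F : ℝ → ℝ := fun t => (t - u) / H * (Real.arctan (H / u) + Real.arctan (H / t)) -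
    (Real.log (t ^ 2 + H ^ 2) - Real.log (u ^ 2 + H ^ 2)) with hF
  have hder : ∀ t : ℝ, 0 < t →
      HasDerivAt F ((1 / H) * (Real.arctan (H / u) + Real.arctan (H / t)) +
        (t - u) / H * (-(H / (t ^ 2 + H ^ 2))) - 2 * t / (t ^ 2 + H ^ 2)) t := by
    intro t ht
    have h1 : HasDerivAt (fun t : ℝ => (t - u) / H) (1 / H) t := by
      simpa using ((hasDerivAt_id t).sub_const u).div_const H
    have hq : HasDerivAt (fun t : ℝ => H / t) ((0 * t - H * 1) / t ^ 2) t :=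
      (hasDerivAt_const t H).div (hasDerivAt_id t) ht.ne'
    have h2 : HasDerivAt (fun t : ℝ => Real.arctan (H / t)) (-(H / (t ^ 2 + H ^ 2))) t := by
      have := (Real.hasDerivAt_arctan (H / t)).comp t hq
      refine this.congr_deriv ?_
      field_simp
      ring
    have h3 : HasDerivAt (fun t : ℝ => Real.log (t ^ 2 + H ^ 2)) (2 * t / (t ^ 2 + H ^ 2)) t := by
      have := ((hasDerivAt_pow 2 t).add_const (H ^ 2)).log (by positivity)
      convert this using 1
      push_cast
      ring_nf
    have hp := h1.mul ((hasDerivAt_const t (Real.arctan (H / u))).add h2)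
    have := hp.sub (h3.sub_const (Real.log (u ^ 2 + H ^ 2)))
    refine this.congr_deriv ?_
    simp only [Pi.add_apply]
    ring
  have hmono : StrictMonoOn F (Set.Ici u) := by
    apply strictMonoOn_of_deriv_pos (convex_Ici u)
    · exact fun t htm => (hder t (lt_of_lt_of_le hu htm)).continuousAt.continuousWithinAt
    · intro t ht
      rw [interior_Ici] at ht
      have ht0 : 0 < t := hu.trans ht
      rw [(hder t ht0).deriv]
      set α := Real.arctan (H / u)
      set β := Real.arctan (H / t)
      have hα0 : 0 < α := by
        simpa [α] using Real.arctan_strictMono (show (0:ℝ) < H / u by positivity)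
      have hquad : H < α ^ 2 * H + α * u := aux_quad hu hH
      have hβ : H * t < β * (t ^ 2 + H ^ 2) := by
        have h := aux_arctan (show (0:ℝ) < H / t by positivity)
        rw [show H / t / (1 + (H / t) ^ 2) = H * t / (t ^ 2 + H ^ 2) by field_simp] at h
        exact (div_lt_iff₀ (by positivity)).mp h
      have hαt : 2 * H * t - H * u < α * (t ^ 2 + H ^ 2) := by
        nlinarith [sq_nonneg (α * t - H), mul_pos hH (sub_pos.mpr hquad), hα0, ht0, hH]
      have hden : 0 < H * (t ^ 2 + H ^ 2) := by positivity
      have heq : (1 / H) * (α + β) + (t - u) / H * (-(H / (t ^ 2 + H ^ 2))) -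
          2 * t / (t ^ 2 + H ^ 2) =
          ((α + β) * (t ^ 2 + H ^ 2) - H * (t - u) - 2 * H * t) / (H * (t ^ 2 + H ^ 2)) := by
        field_simp
        ring
      rw [heq]
      apply div_pos _ hden
      nlinarith [hβ, hαt]
  have hlt := hmono (Set.self_mem_Ici) (Set.mem_Ici.mpr huv.le) huv
  have hFu : F u = 0 := by simp [hF]
  rw [hFu, hF] at hlt
  simp only at hlt
  linarith

lemma core {γ y H : ℝ} (hγ : 0 < γ) (hH : 0 < H) (hyH : γ * H < y) :
    Real.exp (-(γ * π) - γ * Real.arctan (H / (y + γ * H))) *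
      Real.sqrt (y ^ 2 + 2 * γ * y * H + (1 + γ ^ 2) * H ^ 2) <
    Real.exp (-(γ * π) + γ * Real.arctan (H / (y - γ * H))) *
      Real.sqrt (y ^ 2 - 2 * γ * y * H + (1 + γ ^ 2) * H ^ 2) := by
  have hγH : 0 < γ * H := mul_pos hγ hH
  set u := y - γ * H with hu_def
  set v := y + γ * H with hv_def
  have hu : 0 < u := by rw [hu_def]; linarith
  have hv : 0 < v := by rw [hv_def]; linarith
  have huv : u < v := by rw [hu_def, hv_def]; linarith
  rw [show y ^ 2 - 2 * γ * y * H + (1 + γ ^ 2) * H ^ 2 = u ^ 2 + H ^ 2 by rw [hu_def]; ring,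
    show y ^ 2 + 2 * γ * y * H + (1 + γ ^ 2) * H ^ 2 = v ^ 2 + H ^ 2 by rw [hv_def]; ring]
  set α := Real.arctan (H / u) with hα
  set β := Real.arctan (H / v) with hβ
  have hk := key hu hH huv
  rw [show (v - u) / H = 2 * γ by rw [hu_def, hv_def]; field_simp; ring] at hk
  have hApos : 0 < u ^ 2 + H ^ 2 := by positivity
  have hBpos : 0 < v ^ 2 + H ^ 2 := by positivity
  have hB : v ^ 2 + H ^ 2 < Real.exp (2 * γ * (α + β)) * (u ^ 2 + H ^ 2) := by
    calc v ^ 2 + H ^ 2 = Real.exp (Real.log (v ^ 2 + H ^ 2)) := (Real.exp_log hBpos).symm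
      _ < Real.exp (2 * γ * (α + β) + Real.log (u ^ 2 + H ^ 2)) := by
          apply Real.exp_lt_exp.mpr; linarith
      _ = _ := by rw [Real.exp_add, Real.exp_log hApos]
  have hsq : Real.sqrt (v ^ 2 + H ^ 2) <
      Real.exp (γ * (α + β)) * Real.sqrt (u ^ 2 + H ^ 2) := by
    have h1 := Real.sqrt_lt_sqrt (by positivity) hB
    rwa [Real.sqrt_mul (Real.exp_nonneg _),
      show Real.exp (2 * γ * (α + β)) = (Real.exp (γ * (α + β))) ^ 2 by
        rw [sq, ← Real.exp_add]; ring_nf,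
      Real.sqrt_sq (Real.exp_nonneg _)] at h1
  calc Real.exp (-(γ * π) - γ * β) * Real.sqrt (v ^ 2 + H ^ 2)
      < Real.exp (-(γ * π) - γ * β) * (Real.exp (γ * (α + β)) * Real.sqrt (u ^ 2 + H ^ 2)) :=
        (mul_lt_mul_iff_right₀ (Real.exp_pos _)).mpr hsq
    _ = Real.exp (-(γ * π) + γ * α) * Real.sqrt (u ^ 2 + H ^ 2) := by
        rw [← mul_assoc, ← Real.exp_add]; ring_nf


theorem stmt_3 (γ : ℝ) (hγ : 0 < γ) (h : ℝ → ℝ)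
    (hC1 : ContDiff ℝ 1 h) (h0 : h 0 = 0)
    (hbound : ∀ y : ℝ, 0 < y → |h y| < y / γ)
    (f : ℝ → ℝ)
    (hf : ∀ y : ℝ, f y =
      Real.exp (-(γ * Real.pi) + γ * Real.arctan (h y / (y - γ * h y))) *
        Real.sqrt (y ^ 2 - 2 * γ * y * h y + (1 + γ ^ 2) * h y ^ 2) -
      Real.exp (-(γ * Real.pi) - γ * Real.arctan (h y / (y + γ * h y))) *
        Real.sqrt (y ^ 2 + 2 * γ * y * h y + (1 + γ ^ 2) * h y ^ 2)) :
    ∀ y : ℝ, 0 < y →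
      (0 < h y → 0 < f y) ∧ (h y < 0 → f y < 0) ∧ (h y = 0 → f y = 0) := by
  intro y hy
  have hb := hbound y hy
  have hb' : γ * |h y| < y := by
    have h2 : |h y| * γ < y := (lt_div_iff₀ hγ).mp hb
    linarith [h2, mul_comm γ (|h y|)]
  have habs1 : γ * h y ≤ γ * |h y| := mul_le_mul_of_nonneg_left (le_abs_self _) hγ.le
  have habs2 : γ * -h y ≤ γ * |h y| := mul_le_mul_of_nonneg_left (neg_le_abs _) hγ.le
  refine ⟨?_, ?_, ?_⟩
  · intro hpos
    have hc := core hγ hpos (lt_of_le_of_lt habs1 hb')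
    rw [hf y]
    linarith
  · intro hneg
    have hH : 0 < -h y := by linarith
    have hc := core hγ hH (lt_of_le_of_lt habs2 hb')
    rw [hf y]
    have e1 : Real.arctan (h y / (y - γ * h y)) = -Real.arctan (-h y / (y + γ * -h y)) := by
      rw [← Real.arctan_neg]
      congr 1
      ring
    have e2 : Real.arctan (h y / (y + γ * h y)) = -Real.arctan (-h y / (y - γ * -h y)) := by
      rw [← Real.arctan_neg]
      congr 1
      ring
    have a1 : y ^ 2 - 2 * γ * y * h y + (1 + γ ^ 2) * h y ^ 2 =
        y ^ 2 + 2 * γ * y * -h y + (1 + γ ^ 2) * (-h y) ^ 2 := by ring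
    have a2 : y ^ 2 + 2 * γ * y * h y + (1 + γ ^ 2) * h y ^ 2 =
        y ^ 2 - 2 * γ * y * -h y + (1 + γ ^ 2) * (-h y) ^ 2 := by ring
    rw [e1, e2, a1, a2]
    have e3 : -(γ * π) + γ * -Real.arctan (-h y / (y + γ * -h y)) =
        -(γ * π) - γ * Real.arctan (-h y / (y + γ * -h y)) := by ring
    have e4 : -(γ * π) - γ * -Real.arctan (-h y / (y - γ * -h y)) =
        -(γ * π) + γ * Real.arctan (-h y / (y - γ * -h y)) := by ring
    rw [e3, e4]
    linarith
  · intro hzero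
    rw [hf y, hzero]
    simp
end

section
/- Let γ > 0, y > 0, and x with |x| < y/γ. Then exp(γ·arctan(x/(y − γx)))·sqrt(y² + 2γyx + (1+γ²)x²) = exp(−γ·arctan(x/(y + γx)))·sqrt(y² − 2γyx + (1+γ²)x²) if and only if x = 0. -/
open Real

theorem stmt_4 (γ y x : ℝ) (hγ : 0 < γ) (hy : 0 < y) (hx : |x| < y / γ) :
    Real.exp (γ * Real.arctan (x / (y - γ * x))) *
        Real.sqrt (y ^ 2 + 2 * γ * y * x + (1 + γ ^ 2) * x ^ 2) =
      Real.exp (-(γ * Real.arctan (x / (y + γ * x)))) *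
        Real.sqrt (y ^ 2 - 2 * γ * y * x + (1 + γ ^ 2) * x ^ 2) ↔ x = 0 := by
  obtain ⟨hx1, hx2⟩ := abs_lt.mp hx
  rw [lt_div_iff₀ hγ] at hx2
  rw [neg_lt, show y / γ = y / γ from rfl] at hx1; rw [lt_div_iff₀ hγ] at hx1
  have hm : 0 < y - γ * x := by nlinarith
  have hp : 0 < y + γ * x := by nlinarith
  constructor
  · intro h
    by_contra hx0
    rcases lt_or_gt_of_ne hx0 with hneg | hpos
    · -- x < 0 : LHS < RHS
      have a1 : Real.arctan (x / (y - γ * x)) < 0 := by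
        rw [← Real.arctan_zero]
        exact Real.arctan_strictMono (div_neg_of_neg_of_pos hneg hm)
      have a2 : Real.arctan (x / (y + γ * x)) < 0 := by
        rw [← Real.arctan_zero]
        exact Real.arctan_strictMono (div_neg_of_neg_of_pos hneg hp)
      have e1 : Real.exp (γ * Real.arctan (x / (y - γ * x))) < 1 := by
        rw [Real.exp_lt_one_iff]; nlinarith
      have e2 : 1 < Real.exp (-(γ * Real.arctan (x / (y + γ * x)))) := by
        rw [Real.one_lt_exp_iff]; nlinarith
      have hB : (0:ℝ) < y ^ 2 - 2 * γ * y * x + (1 + γ ^ 2) * x ^ 2 := by nlinarith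
      have hA : (0:ℝ) < y ^ 2 + 2 * γ * y * x + (1 + γ ^ 2) * x ^ 2 := by nlinarith
      have s1 : Real.sqrt (y ^ 2 + 2 * γ * y * x + (1 + γ ^ 2) * x ^ 2) <
          Real.sqrt (y ^ 2 - 2 * γ * y * x + (1 + γ ^ 2) * x ^ 2) :=
        Real.sqrt_lt_sqrt (le_of_lt hA) (by nlinarith [mul_pos hγ hy])
      have sApos : 0 < Real.sqrt (y ^ 2 + 2 * γ * y * x + (1 + γ ^ 2) * x ^ 2) :=
        Real.sqrt_pos.mpr hA
      nlinarith [Real.exp_pos (γ * Real.arctan (x / (y - γ * x))),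
        Real.exp_pos (-(γ * Real.arctan (x / (y + γ * x)))),
        Real.sqrt_nonneg (y ^ 2 - 2 * γ * y * x + (1 + γ ^ 2) * x ^ 2)]
    · -- 0 < x : LHS > RHS
      have a1 : 0 < Real.arctan (x / (y - γ * x)) := by
        rw [← Real.arctan_zero]
        exact Real.arctan_strictMono (div_pos hpos hm)
      have a2 : 0 < Real.arctan (x / (y + γ * x)) := by
        rw [← Real.arctan_zero]
        exact Real.arctan_strictMono (div_pos hpos hp)
      have e1 : 1 < Real.exp (γ * Real.arctan (x / (y - γ * x))) := by
        rw [Real.one_lt_exp_iff]; nlinarith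
      have e2 : Real.exp (-(γ * Real.arctan (x / (y + γ * x)))) < 1 := by
        rw [Real.exp_lt_one_iff]; nlinarith
      have hB : (0:ℝ) < y ^ 2 - 2 * γ * y * x + (1 + γ ^ 2) * x ^ 2 := by nlinarith
      have hA : (0:ℝ) < y ^ 2 + 2 * γ * y * x + (1 + γ ^ 2) * x ^ 2 := by nlinarith
      have s1 : Real.sqrt (y ^ 2 - 2 * γ * y * x + (1 + γ ^ 2) * x ^ 2) <
          Real.sqrt (y ^ 2 + 2 * γ * y * x + (1 + γ ^ 2) * x ^ 2) :=
        Real.sqrt_lt_sqrt (le_of_lt hB) (by nlinarith [mul_pos hγ hy])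
      have sBpos : 0 < Real.sqrt (y ^ 2 - 2 * γ * y * x + (1 + γ ^ 2) * x ^ 2) :=
        Real.sqrt_pos.mpr hB
      nlinarith [Real.exp_pos (γ * Real.arctan (x / (y - γ * x))),
        Real.exp_pos (-(γ * Real.arctan (x / (y + γ * x)))),
        Real.sqrt_nonneg (y ^ 2 + 2 * γ * y * x + (1 + γ ^ 2) * x ^ 2)]
  · rintro rfl
    simp
end

section
/- Let γ > 0, y > 0, and h(y) real with |h(y)| < y/γ. Setting t_L = π + arctan(h(y)/(y + γh(y))) and φ₂⁻(t,x,y) = e^{−γt}[((γ²+1)x + γy)sin t + y cos t], one has φ₂⁻(t_L, h(y), y) = −exp(−γπ − γ·arctan(h(y)/(y + γh(y))))·sqrt((y + γh(y))² + h(y)²). -/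
open Real

theorem stmt_9 (γ y hy' : ℝ) (hγ : 0 < γ) (hy : 0 < y) (hb : |hy'| < y / γ)
    (tL : ℝ) (htL : tL = Real.pi + Real.arctan (hy' / (y + γ * hy')))
    (φ₂ : ℝ → ℝ → ℝ → ℝ)
    (hφ₂ : ∀ t x y, φ₂ t x y =
      Real.exp (-(γ * t)) * (((γ ^ 2 + 1) * x + γ * y) * Real.sin t + y * Real.cos t)) :
    φ₂ tL hy' y =
      -(Real.exp (-(γ * Real.pi) - γ * Real.arctan (hy' / (y + γ * hy'))) *
        Real.sqrt ((y + γ * hy') ^ 2 + hy' ^ 2)) := by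
  have habs := abs_lt.mp hb
  have ha : 0 < y + γ * hy' := by
    have h2 : -hy' * γ < y := (lt_div_iff₀ hγ).mp (neg_lt.mp habs.1)
    nlinarith
  set a := y + γ * hy' with hadef
  set θ := Real.arctan (hy' / a) with hθ
  set s := Real.sqrt (1 + (hy' / a) ^ 2) with hs
  have hspos : 0 < s := Real.sqrt_pos.mpr (by positivity)
  have hs2 : s ^ 2 = 1 + (hy' / a) ^ 2 := Real.sq_sqrt (by positivity)
  have hsq : Real.sqrt (a ^ 2 + hy' ^ 2) = a * s := by
    rw [show a ^ 2 + hy' ^ 2 = a ^ 2 * (1 + (hy' / a) ^ 2) by field_simp,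
      Real.sqrt_mul (sq_nonneg a), Real.sqrt_sq ha.le]
  rw [hφ₂, htL, hsq, Real.sin_add, Real.cos_add, Real.sin_pi, Real.cos_pi,
    Real.sin_arctan, Real.cos_arctan]
  rw [show -(γ * Real.pi) - γ * θ = -(γ * (Real.pi + θ)) by ring]
  rw [← hs]
  have hE : 0 < Real.exp (-(γ * (Real.pi + θ))) := Real.exp_pos _
  have hs2' : s ^ 2 * a ^ 2 = a ^ 2 + hy' ^ 2 := by
    rw [hs2]; field_simp
  field_simp
  linear_combination hs2' +
    (a + γ * hy') * hadef
end

section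
/- Let 0 < γ < sqrt(3/5), n ∈ ℕ, and h(y) = (2γ/((γ²+1)π))·sin(πy) for 0 ≤ y ≤ (2n+1)/2, h(y) = (2γ/((γ²+1)π))·(−1)ⁿ for y > (2n+1)/2. Then for all y > 0: h(y)(2γ − (1+γ²)h'(y)) < y and h(y)(2γ + (1+γ²)h'(y)) > −y. -/
open Real

-- Taylor bounds
lemma myL1 (t : ℝ) (ht : 0 ≤ t) : t - t^3/6 ≤ Real.sin t := by
  have key : ∀ x : ℝ, HasDerivAt (fun y => Real.sin y - (y - y^3/6))
      (Real.cos x - (1 - x^2/2)) x := by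
    intro x
    have h2 : HasDerivAt (fun y : ℝ => y - y^3/6) (1 - x^2/2) x := by
      have h3 := ((hasDerivAt_pow 3 x).div_const 6)
      have h4 := (hasDerivAt_id x).sub h3
      exact h4.congr_deriv (by push_cast; ring)
    exact (Real.hasDerivAt_sin x).sub h2
  have mono : MonotoneOn (fun y => Real.sin y - (y - y^3/6)) (Set.Ici 0) := by
    apply monotoneOn_of_deriv_nonneg (convex_Ici 0)
    · exact Continuous.continuousOn (by continuity)
    · intro x hx
      exact (key x).differentiableAt.differentiableWithinAt
    · intro x hx
      rw [(key x).deriv]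
      nlinarith [Real.one_sub_sq_div_two_le_cos (x := x)]
  have h5 := mono Set.self_mem_Ici (Set.mem_Ici.2 ht) ht
  simp only [Real.sin_zero] at h5
  linarith

lemma myL2 (t : ℝ) (ht : 0 ≤ t) : Real.cos t ≤ 1 - t^2/2 + t^4/24 := by
  have key : ∀ x : ℝ, HasDerivAt (fun y => (1 - y^2/2 + y^4/24) - Real.cos y)
      (Real.sin x - (x - x^3/6)) x := by
    intro x
    have h2 : HasDerivAt (fun y : ℝ => 1 - y^2/2 + y^4/24) (x^3/6 - x) x := by
      have h3 := (((hasDerivAt_pow 2 x).div_const 2).const_sub 1).add ((hasDerivAt_pow 4 x).div_const 24)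
      exact h3.congr_deriv (by push_cast; ring)
    have h4 := h2.sub (Real.hasDerivAt_cos x)
    exact h4.congr_deriv (by ring)
  have mono : MonotoneOn (fun y => (1 - y^2/2 + y^4/24) - Real.cos y) (Set.Ici 0) := by
    apply monotoneOn_of_deriv_nonneg (convex_Ici 0)
    · exact Continuous.continuousOn (by continuity)
    · intro x hx
      exact (key x).differentiableAt.differentiableWithinAt
    · intro x hx
      rw [(key x).deriv]
      have := myL1 x (le_of_lt (by simpa [interior_Ici] using hx))
      linarith
  have h5 := mono Set.self_mem_Ici (Set.mem_Ici.2 ht) ht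
  simp only [Real.cos_zero] at h5
  linarith

lemma myL3 (t : ℝ) (ht : 0 ≤ t) : Real.sin t ≤ t - t^3/6 + t^5/120 := by
  have key : ∀ x : ℝ, HasDerivAt (fun y => (y - y^3/6 + y^5/120) - Real.sin y)
      ((1 - x^2/2 + x^4/24) - Real.cos x) x := by
    intro x
    have h2 : HasDerivAt (fun y : ℝ => y - y^3/6 + y^5/120) (1 - x^2/2 + x^4/24) x := by
      have h3 := ((hasDerivAt_id x).sub ((hasDerivAt_pow 3 x).div_const 6)).add
        ((hasDerivAt_pow 5 x).div_const 120)
      exact h3.congr_deriv (by push_cast; ring)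
    exact h2.sub (Real.hasDerivAt_sin x)
  have mono : MonotoneOn (fun y => (y - y^3/6 + y^5/120) - Real.sin y) (Set.Ici 0) := by
    apply monotoneOn_of_deriv_nonneg (convex_Ici 0)
    · exact Continuous.continuousOn (by continuity)
    · intro x hx
      exact (key x).differentiableAt.differentiableWithinAt
    · intro x hx
      rw [(key x).deriv]
      have := myL2 x (le_of_lt (by simpa [interior_Ici] using hx))
      linarith
  have h5 := mono Set.self_mem_Ici (Set.mem_Ici.2 ht) ht
  simp only [Real.sin_zero] at h5
  linarith

-- polynomial inequality
lemma myPoly (u : ℝ) (h0 : 0 ≤ u) (h1 : u ≤ 1) :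
    3*u*(1-u/6+u^2/120)^3*(1-u/2+u^2/24) ≤ 1 := by
  rcases le_total u (7/10) with hc | hc
  · have hv : (0:ℝ) ≤ u := h0
    have hw : (0:ℝ) ≤ 7/10 - u := by linarith
    nlinarith [mul_nonneg (pow_nonneg hv 0) (pow_nonneg hw 9), mul_nonneg (pow_nonneg hv 1) (pow_nonneg hw 8), mul_nonneg (pow_nonneg hv 2) (pow_nonneg hw 7), mul_nonneg (pow_nonneg hv 3) (pow_nonneg hw 6), mul_nonneg (pow_nonneg hv 4) (pow_nonneg hw 5), mul_nonneg (pow_nonneg hv 5) (pow_nonneg hw 4), mul_nonneg (pow_nonneg hv 6) (pow_nonneg hw 3), mul_nonneg (pow_nonneg hv 7) (pow_nonneg hw 2), mul_nonneg (pow_nonneg hv 8) (pow_nonneg hw 1), mul_nonneg (pow_nonneg hv 9) (pow_nonneg hw 0)]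
  · have hv : (0:ℝ) ≤ u - 7/10 := by linarith
    have hw : (0:ℝ) ≤ 1 - u := by linarith
    nlinarith [mul_nonneg (pow_nonneg hv 0) (pow_nonneg hw 9), mul_nonneg (pow_nonneg hv 1) (pow_nonneg hw 8), mul_nonneg (pow_nonneg hv 2) (pow_nonneg hw 7), mul_nonneg (pow_nonneg hv 3) (pow_nonneg hw 6), mul_nonneg (pow_nonneg hv 4) (pow_nonneg hw 5), mul_nonneg (pow_nonneg hv 5) (pow_nonneg hw 4), mul_nonneg (pow_nonneg hv 6) (pow_nonneg hw 3), mul_nonneg (pow_nonneg hv 7) (pow_nonneg hw 2), mul_nonneg (pow_nonneg hv 8) (pow_nonneg hw 1), mul_nonneg (pow_nonneg hv 9) (pow_nonneg hw 0)]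

-- key inequality A : sin x (1 - cos x) ≤ 2/3 x for x > 0
lemma myKeyA (x : ℝ) (hx : 0 < x) : Real.sin x * (1 - Real.cos x) ≤ 2/3 * x := by
  set t := x/2 with htdef
  have ht0 : 0 < t := by positivity
  have hsc : Real.sin t ^ 2 + Real.cos t ^ 2 = 1 := Real.sin_sq_add_cos_sq t
  have hx2 : x = 2 * t := by rw [htdef]; ring
  have hsin : Real.sin x = 2 * Real.sin t * Real.cos t := by rw [hx2, Real.sin_two_mul]
  have hcos : Real.cos x = 2 * Real.cos t ^ 2 - 1 := by rw [hx2, Real.cos_two_mul]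
  set s := Real.sin t
  set c := Real.cos t
  have hid : Real.sin x * (1 - Real.cos x) = 4 * s^3 * c := by
    rw [hsin, hcos]; linear_combination (-4*s*c) * hsc
  rw [hid, hx2]
  rcases le_total t 1 with ht1 | ht1
  · -- t ≤ 1 : Taylor bounds
    have hpi : (3:ℝ) < π := Real.pi_gt_three
    have hs0 : 0 ≤ s := Real.sin_nonneg_of_nonneg_of_le_pi ht0.le (by linarith)
    have hsP : s ≤ t - t^3/6 + t^5/120 := myL3 t ht0.le
    have hcC : c ≤ 1 - t^2/2 + t^4/24 := myL2 t ht0.le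
    have hC0 : (0:ℝ) ≤ 1 - t^2/2 + t^4/24 := by nlinarith
    have hP0 : (0:ℝ) ≤ t - t^3/6 + t^5/120 := le_trans hs0 hsP
    have h1 : s^3 ≤ (t - t^3/6 + t^5/120)^3 := by
      exact pow_le_pow_left₀ hs0 hsP 3
    have h2 : s^3 * c ≤ (t - t^3/6 + t^5/120)^3 * (1 - t^2/2 + t^4/24) := by
      calc s^3 * c ≤ s^3 * (1 - t^2/2 + t^4/24) :=
            mul_le_mul_of_nonneg_left hcC (pow_nonneg hs0 3)
        _ ≤ (t - t^3/6 + t^5/120)^3 * (1 - t^2/2 + t^4/24) :=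
            mul_le_mul_of_nonneg_right h1 hC0
    have hu := myPoly (t^2) (by positivity) (by nlinarith)
    have hid2 : 3 * (t - t^3/6 + t^5/120)^3 * (1 - t^2/2 + t^4/24)
        = t * (3*(t^2)*(1-(t^2)/6+(t^2)^2/120)^3*(1-(t^2)/2+(t^2)^2/24)) := by ring
    have h3 : 3 * (t - t^3/6 + t^5/120)^3 * (1 - t^2/2 + t^4/24) ≤ t := by
      rw [hid2]
      calc t * (3*(t^2)*(1-(t^2)/6+(t^2)^2/120)^3*(1-(t^2)/2+(t^2)^2/24)) ≤ t * 1 :=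
            mul_le_mul_of_nonneg_left hu ht0.le
        _ = t := mul_one t
    nlinarith [h2, h3]
  · -- t ≥ 1 : global bound
    have hz2 : (s^3*c)^2 ≤ 27/256 := by
      nlinarith [sq_nonneg ((s^2-3/4)*s^2), mul_nonneg (sq_nonneg (s^2-3/4)) (sq_nonneg s),
        sq_nonneg (s^2-3/4), hsc]
    have hz : s^3*c ≤ 1/3 := by nlinarith [hz2]
    nlinarith [hz, ht1]

-- key inequality B : -(sin x (1 + cos x)) ≤ 2/3 x for x > 0
lemma myKeyB (x : ℝ) (hx : 0 < x) : -(Real.sin x * (1 + Real.cos x)) ≤ 2/3 * x := by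
  set t := x/2 with htdef
  have ht0 : 0 < t := by positivity
  have hsc : Real.sin t ^ 2 + Real.cos t ^ 2 = 1 := Real.sin_sq_add_cos_sq t
  have hx2 : x = 2 * t := by rw [htdef]; ring
  have hsin : Real.sin x = 2 * Real.sin t * Real.cos t := by rw [hx2, Real.sin_two_mul]
  have hcos : Real.cos x = 2 * Real.cos t ^ 2 - 1 := by rw [hx2, Real.cos_two_mul]
  set s := Real.sin t
  set c := Real.cos t
  have hid : Real.sin x * (1 + Real.cos x) = 4 * s * c^3 := by
    rw [hsin, hcos]; ring
  rw [hid, hx2]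
  rcases le_total t 1 with ht1 | ht1
  · have hpi : (3:ℝ) < π := Real.pi_gt_three
    have hs0 : 0 ≤ s := Real.sin_nonneg_of_nonneg_of_le_pi ht0.le (by linarith)
    have hc0 : 0 ≤ c := Real.cos_nonneg_of_mem_Icc ⟨by linarith, by linarith⟩
    have : 0 ≤ 4 * s * c^3 := by positivity
    linarith
  · have hz2 : (s*c^3)^2 ≤ 27/256 := by
      nlinarith [sq_nonneg ((c^2-3/4)*c^2), mul_nonneg (sq_nonneg (c^2-3/4)) (sq_nonneg c),
        sq_nonneg (c^2-3/4), hsc]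
    have hz : -(s*c^3) ≤ 1/3 := by nlinarith [hz2]
    nlinarith [hz, ht1]

theorem stmt_12 (n : ℕ) (γ : ℝ) (hγ : 0 < γ) (hγ' : γ < Real.sqrt (3 / 5))
    (h h' : ℝ → ℝ)
    (hh : ∀ y : ℝ, 0 ≤ y → h y =
      (2 * γ / ((γ ^ 2 + 1) * Real.pi)) *
        (if y ≤ (2 * n + 1) / 2 then Real.sin (Real.pi * y) else (-1) ^ n))
    (hh' : ∀ y : ℝ, 0 < y → h' y =
      if y ≤ (2 * n + 1) / 2 then (2 * γ / (γ ^ 2 + 1)) * Real.cos (Real.pi * y) else 0) :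
    ∀ y : ℝ, 0 < y →
      h y * (2 * γ - (1 + γ ^ 2) * h' y) < y ∧
      -y < h y * (2 * γ + (1 + γ ^ 2) * h' y) := by
  have hπ : (0:ℝ) < π := Real.pi_pos
  have hπ3 : (3:ℝ) < π := Real.pi_gt_three
  have hA : (0:ℝ) < γ^2 + 1 := by positivity
  have hγ2 : γ^2 < 3/5 := by
    have hs := Real.sq_sqrt (show (0:ℝ) ≤ 3/5 by norm_num)
    nlinarith [Real.sqrt_nonneg (3/5 : ℝ)]
  intro y hy
  rw [hh y hy.le, hh' y hy]
  by_cases hyc : y ≤ (2 * (n:ℝ) + 1) / 2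
  · rw [if_pos hyc, if_pos hyc]
    set s := Real.sin (π * y)
    set c := Real.cos (π * y)
    have hxpos : 0 < π * y := by positivity
    have hKA := myKeyA (π * y) hxpos
    have hKB := myKeyB (π * y) hxpos
    have e1 : 2 * γ / ((γ^2 + 1) * π) * s * (2*γ - (1+γ^2) * (2*γ/(γ^2+1) * c))
        = (4*γ^2/((γ^2+1)*π)) * (s * (1 - c)) := by
      field_simp
      ring
    have e2 : 2 * γ / ((γ^2 + 1) * π) * s * (2*γ + (1+γ^2) * (2*γ/(γ^2+1) * c))
        = (4*γ^2/((γ^2+1)*π)) * (s * (1 + c)) := by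
      field_simp
      ring
    have hcoef : (0:ℝ) ≤ 4*γ^2/((γ^2+1)*π) := by positivity
    constructor
    · rw [e1]
      have h2 : (4*γ^2/((γ^2+1)*π)) * (s * (1 - c)) ≤ (4*γ^2/((γ^2+1)*π)) * (2/3 * (π*y)) :=
        mul_le_mul_of_nonneg_left hKA hcoef
      have h3 : (4*γ^2/((γ^2+1)*π)) * (2/3 * (π*y)) < y := by
        rw [div_mul_eq_mul_div, div_lt_iff₀ (by positivity)]
        have hpy : 0 < π * y := hxpos
        nlinarith [mul_pos hπ hy]
      linarith
    · rw [e2]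
      have h2 : (4*γ^2/((γ^2+1)*π)) * (-(s * (1 + c))) ≤ (4*γ^2/((γ^2+1)*π)) * (2/3 * (π*y)) :=
        mul_le_mul_of_nonneg_left hKB hcoef
      have h3 : (4*γ^2/((γ^2+1)*π)) * (2/3 * (π*y)) < y := by
        rw [div_mul_eq_mul_div, div_lt_iff₀ (by positivity)]
        nlinarith [mul_pos hπ hy]
      nlinarith [h2, h3]
  · rw [if_neg hyc, if_neg hyc]
    push_neg at hyc
    have hn0 : (0:ℝ) ≤ (n:ℝ) := Nat.cast_nonneg n
    have hy2 : 1/2 < y := by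
      have : (1:ℝ)/2 ≤ (2*(n:ℝ)+1)/2 := by linarith
      linarith
    have hb : 4*γ^2/((γ^2+1)*π) < y := by
      rw [div_lt_iff₀ (by positivity)]
      have h6 : 3*(γ^2+1) < (γ^2+1)*π := by nlinarith
      have h7 : 4*γ^2 < (1/2)*(3*(γ^2+1)) := by nlinarith
      have h8 : (1/2)*(3*(γ^2+1)) < y * ((γ^2+1)*π) := by
        apply mul_lt_mul'' hy2 h6 (by norm_num) (by positivity)
      linarith
    have hbpos : (0:ℝ) < 4*γ^2/((γ^2+1)*π) := by positivity
    rcases neg_one_pow_eq_or ℝ n with he | he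
    · rw [he]
      constructor
      · have e3 : 2*γ/((γ^2+1)*π) * 1 * (2*γ - (1+γ^2)*0) = 4*γ^2/((γ^2+1)*π) := by
          field_simp; ring
        rw [e3]; exact hb
      · have e3 : 2*γ/((γ^2+1)*π) * 1 * (2*γ + (1+γ^2)*0) = 4*γ^2/((γ^2+1)*π) := by
          field_simp; ring
        rw [e3]; linarith
    · rw [he]
      constructor
      · have e3 : 2*γ/((γ^2+1)*π) * (-1) * (2*γ - (1+γ^2)*0) = -(4*γ^2/((γ^2+1)*π)) := by
          field_simp; ring
        rw [e3]; linarith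
      · have e3 : 2*γ/((γ^2+1)*π) * (-1) * (2*γ + (1+γ^2)*0) = -(4*γ^2/((γ^2+1)*π)) := by
          field_simp; ring
        rw [e3]; linarith
end

section
/- Let 0 < α < (−1+√3)/2 and h(y) = α·y²·sin(1/y) for y > 0. Then for all y > 0: 2h(y)(1 − h'(y)) < y and 2h(y)(1 + h'(y)) > −y, where h'(y) = 2αy·sin(1/y) − α·cos(1/y). -/
open Real

theorem stmt_15 (α : ℝ) (hα : 0 < α) (hα' : α < (-1 + Real.sqrt 3) / 2) :
    ∀ y : ℝ, 0 < y →
      2 * (α * y ^ 2 * Real.sin (1 / y)) *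
          (1 - (2 * α * y * Real.sin (1 / y) - α * Real.cos (1 / y))) < y ∧
      -y < 2 * (α * y ^ 2 * Real.sin (1 / y)) *
          (1 + (2 * α * y * Real.sin (1 / y) - α * Real.cos (1 / y))) := by
  intro y hy
  have hsq : Real.sqrt 3 ^ 2 = 3 := Real.sq_sqrt (by norm_num)
  have hkey : 2 * α * (1 + α) < 1 := by nlinarith [Real.sqrt_nonneg 3]
  set s := Real.sin (1 / y) with hs
  set c := Real.cos (1 / y) with hc
  set u := y * s with hu
  have hys : |u| ≤ 1 := by
    have h1 : |s| ≤ |1 / y| := Real.abs_sin_le_abs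
    have h2 : |1 / y| = 1 / y := abs_of_pos (by positivity)
    calc |u| = |y| * |s| := abs_mul _ _
    _ ≤ |y| * |1 / y| := by gcongr
    _ = y * (1 / y) := by rw [h2, abs_of_pos hy]
    _ = 1 := by field_simp
  have hys1 : u ≤ 1 := le_of_abs_le hys
  have hys2 : -1 ≤ u := neg_le_of_abs_le hys
  have hc1 : c ≤ 1 := Real.cos_le_one _
  have hc2 : -1 ≤ c := Real.neg_one_le_cos _
  have k1 : 2 * α * u * (1 - 2 * α * u + α * c) < 1 := by
    nlinarith [sq_nonneg (α * u), mul_nonneg (sub_nonneg.2 hys1) (sub_nonneg.2 hc1),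
      mul_nonneg (by linarith : (0:ℝ) ≤ 1 + u) (by linarith : (0:ℝ) ≤ 1 + c),
      mul_nonneg (sub_nonneg.2 hys1) (by linarith : (0:ℝ) ≤ 1 + c),
      mul_nonneg (by linarith : (0:ℝ) ≤ 1 + u) (sub_nonneg.2 hc1),
      mul_pos hα hα]
  have k2 : -1 < 2 * α * u * (1 + 2 * α * u - α * c) := by
    nlinarith [sq_nonneg (α * u), mul_nonneg (sub_nonneg.2 hys1) (sub_nonneg.2 hc1),
      mul_nonneg (by linarith : (0:ℝ) ≤ 1 + u) (by linarith : (0:ℝ) ≤ 1 + c),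
      mul_nonneg (sub_nonneg.2 hys1) (by linarith : (0:ℝ) ≤ 1 + c),
      mul_nonneg (by linarith : (0:ℝ) ≤ 1 + u) (sub_nonneg.2 hc1),
      mul_pos hα hα]
  constructor
  · have e : 2 * (α * y ^ 2 * s) * (1 - (2 * α * y * s - α * c))
        = y * (2 * α * u * (1 - 2 * α * u + α * c)) := by rw [hu]; ring
    rw [e]
    calc y * (2 * α * u * (1 - 2 * α * u + α * c)) < y * 1 := by
          exact (mul_lt_mul_iff_right₀ hy).2 k1
    _ = y := mul_one y
  · have e : 2 * (α * y ^ 2 * s) * (1 + (2 * α * y * s - α * c))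
        = y * (2 * α * u * (1 + 2 * α * u - α * c)) := by rw [hu]; ring
    rw [e]
    calc -y = y * (-1) := by ring
    _ < y * (2 * α * u * (1 + 2 * α * u - α * c)) := (mul_lt_mul_iff_right₀ hy).2 k2
end

section
/- Let γ > 0 and let h be C¹ with h(y*) = 0 for some y* > 0. Then the displacement function f(y) = exp(−γπ + γ·arctan(h(y)/(y − γh(y))))·sqrt(y² − 2γy·h(y) + (1+γ²)h(y)²) − exp(−γπ − γ·arctan(h(y)/(y + γh(y))))·sqrt(y² + 2γy·h(y) + (1+γ²)h(y)²) satisfies f(y*) = 0 and f'(y*) = 0. -/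
open Real

theorem stmt_18 (γ : ℝ) (hγ : 0 < γ) (h : ℝ → ℝ) (hC1 : ContDiff ℝ 1 h)
    (ystar : ℝ) (hystar : 0 < ystar) (hz : h ystar = 0)
    (hbound : ∀ᶠ y in nhds ystar, |h y| < y / γ)
    (f : ℝ → ℝ)
    (hf : ∀ y : ℝ, f y =
      Real.exp (-(γ * Real.pi) + γ * Real.arctan (h y / (y - γ * h y))) *
        Real.sqrt (y ^ 2 - 2 * γ * y * h y + (1 + γ ^ 2) * h y ^ 2) -
      Real.exp (-(γ * Real.pi) - γ * Real.arctan (h y / (y + γ * h y))) *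
        Real.sqrt (y ^ 2 + 2 * γ * y * h y + (1 + γ ^ 2) * h y ^ 2)) :
    f ystar = 0 ∧ HasDerivAt f 0 ystar := by
  have hfe : f = fun y =>
      Real.exp (-(γ * Real.pi) + γ * Real.arctan (h y / (y - γ * h y))) *
        Real.sqrt (y ^ 2 - 2 * γ * y * h y + (1 + γ ^ 2) * h y ^ 2) -
      Real.exp (-(γ * Real.pi) - γ * Real.arctan (h y / (y + γ * h y))) *
        Real.sqrt (y ^ 2 + 2 * γ * y * h y + (1 + γ ^ 2) * h y ^ 2) := funext hf
  subst hfe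
  have hne : ystar ≠ 0 := ne_of_gt hystar
  have hh : HasDerivAt h (deriv h ystar) ystar :=
    ((hC1.differentiable one_ne_zero) ystar).hasDerivAt
  set a := deriv h ystar with ha
  constructor
  · simp only [hz]
    norm_num [Real.sqrt_sq hystar.le]
  -- denominators nonzero
  have hden1 : ystar - γ * h ystar ≠ 0 := by rw [hz]; simpa using hne
  have hden2 : ystar + γ * h ystar ≠ 0 := by rw [hz]; simpa using hne
  -- inner sqrt arguments nonzero
  have hq1 : ystar ^ 2 - 2 * γ * ystar * h ystar + (1 + γ ^ 2) * h ystar ^ 2 ≠ 0 := by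
    rw [hz]; ring_nf; positivity
  have hq2 : ystar ^ 2 + 2 * γ * ystar * h ystar + (1 + γ ^ 2) * h ystar ^ 2 ≠ 0 := by
    rw [hz]; ring_nf; positivity
  -- derivatives of denominators
  have d1 : HasDerivAt (fun y => y - γ * h y) (1 - γ * a) ystar :=
    (hasDerivAt_id ystar).sub (hh.const_mul γ)
  have d2 : HasDerivAt (fun y => y + γ * h y) (1 + γ * a) ystar :=
    (hasDerivAt_id ystar).add (hh.const_mul γ)
  have du1 : HasDerivAt (fun y => h y / (y - γ * h y))
      ((a * (ystar - γ * h ystar) - h ystar * (1 - γ * a)) / (ystar - γ * h ystar) ^ 2)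
      ystar := hh.div d1 hden1
  have du2 : HasDerivAt (fun y => h y / (y + γ * h y))
      ((a * (ystar + γ * h ystar) - h ystar * (1 + γ * a)) / (ystar + γ * h ystar) ^ 2)
      ystar := hh.div d2 hden2
  have darc1 := du1.arctan
  have darc2 := du2.arctan
  -- exponents
  have de1 : HasDerivAt
      (fun y => -(γ * Real.pi) + γ * Real.arctan (h y / (y - γ * h y)))
      (γ * (1 / (1 + (h ystar / (ystar - γ * h ystar)) ^ 2) *
        ((a * (ystar - γ * h ystar) - h ystar * (1 - γ * a)) / (ystar - γ * h ystar) ^ 2)))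
      ystar := by
    have := (hasDerivAt_const ystar (-(γ * Real.pi))).add (darc1.const_mul γ)
    simpa [Pi.add_def] using this
  have de2 : HasDerivAt
      (fun y => -(γ * Real.pi) - γ * Real.arctan (h y / (y + γ * h y)))
      (-(γ * (1 / (1 + (h ystar / (ystar + γ * h ystar)) ^ 2) *
        ((a * (ystar + γ * h ystar) - h ystar * (1 + γ * a)) / (ystar + γ * h ystar) ^ 2))))
      ystar := by
    have := (hasDerivAt_const ystar (-(γ * Real.pi))).sub (darc2.const_mul γ)
    simpa [Pi.sub_def] using this
  have dE1 := de1.exp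
  have dE2 := de2.exp
  -- sqrt inner polynomials
  have dq1 : HasDerivAt
      (fun y => y ^ 2 - 2 * γ * y * h y + (1 + γ ^ 2) * h y ^ 2)
      (2 * ystar - (2 * γ * ystar * a + 2 * γ * 1 * h ystar)
        + (1 + γ ^ 2) * (2 * h ystar * a)) ystar := by
    have p1 : HasDerivAt (fun y : ℝ => y ^ 2) (2 * ystar) ystar := by
      simpa using hasDerivAt_pow 2 ystar
    have p2 : HasDerivAt (fun y : ℝ => 2 * γ * y * h y)
        (2 * γ * ystar * a + 2 * γ * 1 * h ystar) ystar := by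
      have := (((hasDerivAt_id ystar).const_mul (2 * γ)).mul hh)
      refine this.congr_deriv ?_
      simp only [id_eq]; ring
    have p3 : HasDerivAt (fun y : ℝ => (1 + γ ^ 2) * h y ^ 2)
        ((1 + γ ^ 2) * (2 * h ystar * a)) ystar := by
      have := ((hh.pow 2).const_mul (1 + γ ^ 2))
      refine this.congr_deriv ?_
      push_cast; ring
    exact (p1.sub p2).add p3
  have dq2 : HasDerivAt
      (fun y => y ^ 2 + 2 * γ * y * h y + (1 + γ ^ 2) * h y ^ 2)
      (2 * ystar + (2 * γ * ystar * a + 2 * γ * 1 * h ystar)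
        + (1 + γ ^ 2) * (2 * h ystar * a)) ystar := by
    have p1 : HasDerivAt (fun y : ℝ => y ^ 2) (2 * ystar) ystar := by
      simpa using hasDerivAt_pow 2 ystar
    have p2 : HasDerivAt (fun y : ℝ => 2 * γ * y * h y)
        (2 * γ * ystar * a + 2 * γ * 1 * h ystar) ystar := by
      have := (((hasDerivAt_id ystar).const_mul (2 * γ)).mul hh)
      refine this.congr_deriv ?_
      simp only [id_eq]; ring
    have p3 : HasDerivAt (fun y : ℝ => (1 + γ ^ 2) * h y ^ 2)
        ((1 + γ ^ 2) * (2 * h ystar * a)) ystar := by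
      have := ((hh.pow 2).const_mul (1 + γ ^ 2))
      refine this.congr_deriv ?_
      push_cast; ring
    exact (p1.add p2).add p3
  have ds1 := dq1.sqrt hq1
  have ds2 := dq2.sqrt hq2
  have dg1 := dE1.mul ds1
  have dg2 := dE2.mul ds2
  have D := dg1.sub dg2
  refine (D.congr_deriv ?_).congr_deriv rfl
  symm
  simp only [hz, mul_zero, zero_mul, sub_zero, add_zero, zero_div, zero_pow,
    Real.arctan_zero, ne_eq, OfNat.ofNat_ne_zero, not_false_eq_true, mul_one]
  norm_num
  rw [Real.sqrt_sq hystar.le]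
  field_simp
  ring
end

section
/- Let 0 < γ < sqrt(3/13), n ∈ ℕ, and h(y) = (2γ/((γ²+1)π))·(1 − cos(πy)) for 0 ≤ y ≤ 2n+1, h(y) = 4γ/((γ²+1)π) for y > 2n+1. Then h(y) ≥ 0 for all y ≥ 0, |h(y)| < y/γ for y > 0, and h(y)(2γ − (1+γ²)h'(y)) < y and h(y)(2γ + (1+γ²)h'(y)) > −y for all y > 0. -/
open Real

lemma aux_cos (t : ℝ) (ht : 0 ≤ t) : 1 - Real.cos t ≤ t := by
  rcases le_or_gt t 2 with h2 | h2
  · have := Real.one_sub_sq_div_two_le_cos (x := t)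
    nlinarith
  · have := Real.neg_one_le_cos t
    linarith

lemma aux_prod (t : ℝ) (ht : 0 ≤ t) :
    (1 - Real.cos t) * (1 - Real.sin t) ≤ 4 / 3 * t := by
  have hc1 := Real.cos_le_one t
  have hc2 := Real.neg_one_le_cos t
  have hs1 := Real.sin_le_one t
  have hs2 := Real.neg_one_le_sin t
  rcases le_or_gt t (4/3) with h1 | h1
  · have hq := Real.one_sub_sq_div_two_le_cos (x := t)
    nlinarith [sq_nonneg t]
  rcases le_or_gt t (Real.pi/2) with h2 | h2
  · have hcpos : 0 ≤ Real.cos t := Real.cos_nonneg_of_mem_Icc ⟨by linarith [Real.pi_pos], h2⟩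
    have hspos : 0 ≤ Real.sin t :=
      Real.sin_nonneg_of_nonneg_of_le_pi ht (by linarith [Real.pi_pos])
    nlinarith
  rcases le_or_gt t Real.pi with h3 | h3
  · have hspos : 0 ≤ Real.sin t := Real.sin_nonneg_of_nonneg_of_le_pi ht h3
    nlinarith [Real.pi_gt_three]
  · nlinarith [Real.pi_gt_three]

theorem stmt_19 (n : ℕ) (γ : ℝ) (hγ : 0 < γ) (hγ' : γ < Real.sqrt (3 / 13))
    (h h' : ℝ → ℝ)
    (hh : ∀ y : ℝ, 0 ≤ y → h y =
      (2 * γ / ((γ ^ 2 + 1) * Real.pi)) *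
        (if y ≤ 2 * n + 1 then 1 - Real.cos (Real.pi * y) else 2))
    (hh' : ∀ y : ℝ, 0 < y → h' y =
      if y ≤ 2 * n + 1 then (2 * γ / (γ ^ 2 + 1)) * Real.sin (Real.pi * y) else 0) :
    (∀ y : ℝ, 0 ≤ y → 0 ≤ h y) ∧
    (∀ y : ℝ, 0 < y → |h y| < y / γ) ∧
    (∀ y : ℝ, 0 < y →
      h y * (2 * γ - (1 + γ ^ 2) * h' y) < y ∧
      -y < h y * (2 * γ + (1 + γ ^ 2) * h' y)) := by
  have hπ0 : 0 < Real.pi := Real.pi_pos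
  have hπ3 : 3 < Real.pi := Real.pi_gt_three
  have hd : (0:ℝ) < γ^2 + 1 := by positivity
  have hD : (0:ℝ) < (γ^2 + 1) * Real.pi := by positivity
  have hc : (0:ℝ) < 2 * γ / ((γ^2 + 1) * Real.pi) := by positivity
  have h313 : γ^2 < 3/13 := by
    have h0 : (0:ℝ) ≤ 3/13 := by norm_num
    nlinarith [Real.sq_sqrt h0, Real.sqrt_nonneg (3/13 : ℝ)]
  have hy1 : ∀ y : ℝ, ¬ y ≤ 2 * (n:ℝ) + 1 → (1:ℝ) ≤ y := by
    intro y hy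
    push_neg at hy
    have : (0:ℝ) ≤ 2 * (n:ℝ) := by positivity
    linarith
  have P1 : ∀ y : ℝ, 0 ≤ y → 0 ≤ h y := by
    intro y hy
    rw [hh y hy]
    apply mul_nonneg hc.le
    split_ifs
    · have := Real.cos_le_one (Real.pi * y); linarith
    · norm_num
  refine ⟨P1, ?_, ?_⟩
  · intro y hy
    rw [abs_of_nonneg (P1 y hy.le), hh y hy.le, lt_div_iff₀ hγ]
    split_ifs with hle
    · have hA := aux_cos (Real.pi * y) (by positivity)
      have hA0 : 0 ≤ 1 - Real.cos (Real.pi * y) := by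
        have := Real.cos_le_one (Real.pi * y); linarith
      have key : 2 * γ / ((γ^2 + 1) * Real.pi) * (1 - Real.cos (Real.pi * y)) * γ
          ≤ 2 * γ / ((γ^2 + 1) * Real.pi) * (Real.pi * y) * γ := by
        gcongr
      have h1 : 2 * γ / ((γ^2 + 1) * Real.pi) * (Real.pi * y) * γ = 2 * γ^2 * y / (γ^2 + 1) := by
        field_simp
      rw [h1] at key
      have h2 : 2 * γ^2 * y / (γ^2 + 1) < y := by
        rw [div_lt_iff₀ hd]
        nlinarith
      linarith
    · have hy' := hy1 y hle
      have key : 2 * γ / ((γ^2 + 1) * Real.pi) * 2 * γ < 1 := by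
        rw [div_mul_eq_mul_div, div_mul_eq_mul_div, div_lt_one hD]
        nlinarith
      nlinarith
  · intro y hy
    rw [hh y hy.le, hh' y hy]
    have hA0 : 0 ≤ 1 - Real.cos (Real.pi * y) := by
      have := Real.cos_le_one (Real.pi * y); linarith
    split_ifs with hle
    · constructor
      · have hsimp : (1 + γ^2) * (2 * γ / (γ^2 + 1) * Real.sin (Real.pi * y))
            = 2 * γ * Real.sin (Real.pi * y) := by
          field_simp; ring
        rw [hsimp]
        have hprod := aux_prod (Real.pi * y) (by positivity)
        have heq : 2 * γ / ((γ^2 + 1) * Real.pi) * (1 - Real.cos (Real.pi * y)) *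
            (2 * γ - 2 * γ * Real.sin (Real.pi * y))
            = 4 * γ^2 * ((1 - Real.cos (Real.pi * y)) * (1 - Real.sin (Real.pi * y)))
              / ((γ^2 + 1) * Real.pi) := by
          field_simp; ring
        rw [heq, div_lt_iff₀ hD]
        have hstep : 4 * γ^2 * ((1 - Real.cos (Real.pi * y)) * (1 - Real.sin (Real.pi * y)))
            ≤ 4 * γ^2 * (4/3 * (Real.pi * y)) := by gcongr
        nlinarith [mul_pos hπ0 hy]
      · have hs2 := Real.neg_one_le_sin (Real.pi * y)
        have hpos : 0 ≤ 2 * γ / ((γ^2 + 1) * Real.pi) * (1 - Real.cos (Real.pi * y)) *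
            (2 * γ + (1 + γ^2) * (2 * γ / (γ^2 + 1) * Real.sin (Real.pi * y))) := by
          apply mul_nonneg (mul_nonneg hc.le hA0)
          have hsimp : (1 + γ^2) * (2 * γ / (γ^2 + 1) * Real.sin (Real.pi * y))
              = 2 * γ * Real.sin (Real.pi * y) := by field_simp; ring
          rw [hsimp]; nlinarith
        linarith
    · have hy' := hy1 y hle
      have key : 2 * γ / ((γ^2 + 1) * Real.pi) * 2 * (2 * γ) < 1 := by
        rw [div_mul_eq_mul_div, div_mul_eq_mul_div, div_lt_one hD]
        nlinarith
      have hpos : 0 < 2 * γ / ((γ^2 + 1) * Real.pi) * 2 * (2 * γ) := by positivity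
      constructor
      · simp only [mul_zero, sub_zero]
        nlinarith
      · simp only [mul_zero, add_zero]
        nlinarith
end
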